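/- Let m(z,ζ) = (z·z̄ + (1/2)·z̄²·ζ + (1/2)·z²·ζ̄)/(1 − ζ·ζ̄), a real-valued real-analytic function on {(z,ζ) ∈ ℂ² : |ζ| < 1}. Then for all (z,ζ) with |ζ| < 1 one has m_{zz̄}(z,ζ) = 1/(1 − |ζ|²) ≠ 0, and the Levi determinant vanishes identically: m_{zz̄}·m_{ζζ̄} − m_{zζ̄}·m_{ζz̄} = 0. Hence the Levi matrix of the Gaussier–Merker graphing function has constant rank 1 on {|ζ| < 1}. -/

import Mathlib

open ComplexConjugate

/-- The Gaussier–Merker graphing function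
`m(z,ζ) = (z·z̄ + (1/2)·z̄²·ζ + (1/2)·z²·ζ̄)/(1 − ζ·ζ̄)`,
viewed as a `ℂ`-valued function (it is real-valued on `{|ζ| < 1}`). -/
noncomputable def GMm : ℂ × ℂ → ℂ := fun p =>
  (p.1 * conj p.1 + (1 / 2 : ℂ) * (conj p.1) ^ 2 * p.2 + (1 / 2 : ℂ) * p.1 ^ 2 * conj p.2) /
    (1 - p.2 * conj p.2)

/-- Wirtinger derivative `∂_z` (first variable). -/
noncomputable def dz (f : ℂ × ℂ → ℂ) : ℂ × ℂ → ℂ := fun p =>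
  (1 / 2 : ℂ) * (fderiv ℝ f p (1, 0) - Complex.I * fderiv ℝ f p (Complex.I, 0))

/-- Wirtinger derivative `∂_z̄` (first variable). -/
noncomputable def dzbar (f : ℂ × ℂ → ℂ) : ℂ × ℂ → ℂ := fun p =>
  (1 / 2 : ℂ) * (fderiv ℝ f p (1, 0) + Complex.I * fderiv ℝ f p (Complex.I, 0))

/-- Wirtinger derivative `∂_ζ` (second variable). -/
noncomputable def dzeta (f : ℂ × ℂ → ℂ) : ℂ × ℂ → ℂ := fun p =>
  (1 / 2 : ℂ) * (fderiv ℝ f p (0, 1) - Complex.I * fderiv ℝ f p (0, Complex.I))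

/-- Wirtinger derivative `∂_ζ̄` (second variable). -/
noncomputable def dzetabar (f : ℂ × ℂ → ℂ) : ℂ × ℂ → ℂ := fun p =>
  (1 / 2 : ℂ) * (fderiv ℝ f p (0, 1) + Complex.I * fderiv ℝ f p (0, Complex.I))

/-! Auxiliary material -/

noncomputable def cCLM : ℂ →L[ℝ] ℂ := Complex.conjCLE.toContinuousLinearMap

noncomputable def GMg1 : ℂ × ℂ → ℂ := fun p =>
  (conj p.1 + p.1 * conj p.2) * (1 - p.2 * conj p.2)⁻¹

noncomputable def GMg2 : ℂ × ℂ → ℂ := fun p =>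
  (1 / 2 : ℂ) * (conj p.1 * conj p.1) * (1 - p.2 * conj p.2)⁻¹ +
    (p.1 * conj p.1 + (1 / 2 : ℂ) * (conj p.1 * conj p.1) * p.2
        + (1 / 2 : ℂ) * (p.1 * p.1) * conj p.2) *
      (conj p.2 * ((1 - p.2 * conj p.2)⁻¹ * (1 - p.2 * conj p.2)⁻¹))

lemma GM_den_ne {p : ℂ × ℂ} (h : ‖p.2‖ < 1) : 1 - p.2 * conj p.2 ≠ 0 := by
  have h1 : p.2 * conj p.2 = ((Complex.normSq p.2 : ℝ) : ℂ) := Complex.mul_conj p.2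
  have h2 : Complex.normSq p.2 < 1 := by
    have := Complex.sq_norm p.2
    nlinarith [norm_nonneg p.2]
  rw [h1]
  intro H
  have : ((1 - Complex.normSq p.2 : ℝ) : ℂ) = 0 := by push_cast; linear_combination H
  rw [Complex.ofReal_eq_zero] at this
  linarith

lemma rank_two_eq_one {a b c e : ℂ} (ha : a ≠ 0) (h : a * e = b * c) :
    Matrix.rank !![a, b; c, e] = 1 := by
  have hle : Matrix.rank !![a, b; c, e] ≤ 1 := by
    have hfac : !![a, b; c, e] =
        (Matrix.of ![![a], ![c]] : Matrix (Fin 2) (Fin 1) ℂ) *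
        (Matrix.of ![![1, b / a]] : Matrix (Fin 1) (Fin 2) ℂ) := by
      ext i j
      fin_cases i <;> fin_cases j <;>
        simp [Matrix.mul_apply, Fin.sum_univ_succ] <;> field_simp <;>
        first
          | linear_combination 2*h
          | linear_combination -h
          | linear_combination h
          | linear_combination -2*h
    calc Matrix.rank !![a, b; c, e]
        ≤ Matrix.rank (Matrix.of ![![a], ![c]] : Matrix (Fin 2) (Fin 1) ℂ) := by
          rw [hfac]; exact Matrix.rank_mul_le_left _ _
      _ ≤ Fintype.card (Fin 1) := Matrix.rank_le_card_width _
      _ = 1 := by simp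
  have hne : Matrix.rank !![a, b; c, e] ≠ 0 := by
    rw [Matrix.rank]
    have hv : (!![a, b; c, e]).mulVecLin ![1, 0] ≠ 0 := by
      intro hcon
      have := congrFun hcon 0
      simp [Matrix.mulVecLin_apply, Matrix.mulVec, dotProduct, Fin.sum_univ_succ] at this
      exact ha this
    have : Nontrivial (LinearMap.range (!![a, b; c, e]).mulVecLin) := by
      refine ⟨⟨⟨_, LinearMap.mem_range_self _ ![1, 0]⟩, 0, fun H => hv ?_⟩⟩
      simpa using congrArg Subtype.val H
    have := Module.finrank_pos_iff (R := ℂ) |>.mpr this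
    omega
  omega

set_option maxHeartbeats 2000000 in
lemma GM_first {p : ℂ × ℂ} (h : ‖p.2‖ < 1) :
    dz GMm p = GMg1 p ∧ dzeta GMm p = GMg2 p := by
  have hd0 := GM_den_ne h
  have hd0' : 1 - conj p.2 * p.2 ≠ 0 := by
    rw [mul_comm (conj p.2) p.2]; exact hd0
  have hz : HasFDerivAt (fun p : ℂ × ℂ => p.1) (ContinuousLinearMap.fst ℝ ℂ ℂ) p := hasFDerivAt_fst
  have hzb : HasFDerivAt (fun p : ℂ × ℂ => conj p.1)
      (cCLM.comp (ContinuousLinearMap.fst ℝ ℂ ℂ)) p :=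
    (cCLM.comp (ContinuousLinearMap.fst ℝ ℂ ℂ)).hasFDerivAt
  have hze : HasFDerivAt (fun p : ℂ × ℂ => p.2) (ContinuousLinearMap.snd ℝ ℂ ℂ) p := hasFDerivAt_snd
  have hta : HasFDerivAt (fun p : ℂ × ℂ => conj p.2)
      (cCLM.comp (ContinuousLinearMap.snd ℝ ℂ ℂ)) p :=
    (cCLM.comp (ContinuousLinearMap.snd ℝ ℂ ℂ)).hasFDerivAt
  have hden : HasFDerivAt (𝕜 := ℝ) (fun p : ℂ × ℂ => 1 - p.2 * conj p.2) _ p :=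
    (hasFDerivAt_const (1 : ℂ) p).sub (hze.mul hta)
  have hinv : HasFDerivAt (𝕜 := ℝ) (fun p : ℂ × ℂ => (1 - p.2 * conj p.2)⁻¹) _ p :=
    (hasFDerivAt_inv' (𝕜 := ℝ) hd0).comp p hden
  have hGMeq : GMm = fun p : ℂ × ℂ =>
      (p.1 * conj p.1 + (1 / 2 : ℂ) * (conj p.1 * conj p.1) * p.2
        + (1 / 2 : ℂ) * (p.1 * p.1) * conj p.2) * (1 - p.2 * conj p.2)⁻¹ := by
    funext q; simp only [GMm, div_eq_mul_inv, pow_two]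
  have H := (((hz.mul hzb).add (((hzb.mul hzb).const_mul ((1:ℂ)/2)).mul hze)).add
      (((hz.mul hz).const_mul ((1:ℂ)/2)).mul hta)).mul hinv
  constructor
  · rw [dz, hGMeq]; erw [H.fderiv]
    simp only [ContinuousLinearMap.add_apply, ContinuousLinearMap.smul_apply,
      ContinuousLinearMap.sub_apply, ContinuousLinearMap.comp_apply,
      ContinuousLinearMap.neg_apply, ContinuousLinearMap.mulLeftRight_apply,
      ContinuousLinearMap.coe_fst', ContinuousLinearMap.coe_snd',
      ContinuousLinearMap.zero_apply, cCLM, ContinuousLinearEquiv.coe_coe,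
      Complex.conjCLE_apply, map_one, Complex.conj_I, map_zero, smul_eq_mul]
    rw [GMg1]
    ring_nf
    simp only [Complex.I_sq]
    ring
  · rw [dzeta, hGMeq]; erw [H.fderiv]
    simp only [ContinuousLinearMap.add_apply, ContinuousLinearMap.smul_apply,
      ContinuousLinearMap.sub_apply, ContinuousLinearMap.comp_apply,
      ContinuousLinearMap.neg_apply, ContinuousLinearMap.mulLeftRight_apply,
      ContinuousLinearMap.coe_fst', ContinuousLinearMap.coe_snd',
      ContinuousLinearMap.zero_apply, cCLM, ContinuousLinearEquiv.coe_coe,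
      Complex.conjCLE_apply, map_one, Complex.conj_I, map_zero, smul_eq_mul,
      Pi.mul_apply, Pi.add_apply, Pi.pow_apply]
    rw [GMg2]
    ring_nf
    simp only [Complex.I_sq]
    ring

set_option maxHeartbeats 2000000 in
lemma GM_second_g1 {p : ℂ × ℂ} (h : ‖p.2‖ < 1) :
    dzbar GMg1 p = (1 - p.2 * conj p.2)⁻¹ ∧
    dzetabar GMg1 p = p.1 * (1 - p.2 * conj p.2)⁻¹ +
      (conj p.1 + p.1 * conj p.2) * p.2 *
        ((1 - p.2 * conj p.2)⁻¹ * (1 - p.2 * conj p.2)⁻¹) := by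
  have hd0 := GM_den_ne h
  have hd0' : 1 - conj p.2 * p.2 ≠ 0 := by
    rw [mul_comm (conj p.2) p.2]; exact hd0
  have hz : HasFDerivAt (fun p : ℂ × ℂ => p.1) (ContinuousLinearMap.fst ℝ ℂ ℂ) p := hasFDerivAt_fst
  have hzb : HasFDerivAt (fun p : ℂ × ℂ => conj p.1)
      (cCLM.comp (ContinuousLinearMap.fst ℝ ℂ ℂ)) p :=
    (cCLM.comp (ContinuousLinearMap.fst ℝ ℂ ℂ)).hasFDerivAt
  have hze : HasFDerivAt (fun p : ℂ × ℂ => p.2) (ContinuousLinearMap.snd ℝ ℂ ℂ) p := hasFDerivAt_snd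
  have hta : HasFDerivAt (fun p : ℂ × ℂ => conj p.2)
      (cCLM.comp (ContinuousLinearMap.snd ℝ ℂ ℂ)) p :=
    (cCLM.comp (ContinuousLinearMap.snd ℝ ℂ ℂ)).hasFDerivAt
  have hden : HasFDerivAt (𝕜 := ℝ) (fun p : ℂ × ℂ => 1 - p.2 * conj p.2) _ p :=
    (hasFDerivAt_const (1 : ℂ) p).sub (hze.mul hta)
  have hinv : HasFDerivAt (𝕜 := ℝ) (fun p : ℂ × ℂ => (1 - p.2 * conj p.2)⁻¹) _ p :=
    (hasFDerivAt_inv' (𝕜 := ℝ) hd0).comp p hden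
  have H := (hzb.add (hz.mul hta)).mul hinv
  constructor
  · rw [dzbar]; unfold GMg1; erw [H.fderiv]
    simp only [ContinuousLinearMap.add_apply, ContinuousLinearMap.smul_apply,
      ContinuousLinearMap.sub_apply, ContinuousLinearMap.comp_apply,
      ContinuousLinearMap.neg_apply, ContinuousLinearMap.mulLeftRight_apply,
      ContinuousLinearMap.coe_fst', ContinuousLinearMap.coe_snd',
      ContinuousLinearMap.zero_apply, cCLM, ContinuousLinearEquiv.coe_coe,
      Complex.conjCLE_apply, map_one, Complex.conj_I, map_zero, smul_eq_mul]
    ring_nf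
    simp only [Complex.I_sq]
    ring
  · rw [dzetabar]; unfold GMg1; erw [H.fderiv]
    simp only [ContinuousLinearMap.add_apply, ContinuousLinearMap.smul_apply,
      ContinuousLinearMap.sub_apply, ContinuousLinearMap.comp_apply,
      ContinuousLinearMap.neg_apply, ContinuousLinearMap.mulLeftRight_apply,
      ContinuousLinearMap.coe_fst', ContinuousLinearMap.coe_snd',
      ContinuousLinearMap.zero_apply, cCLM, ContinuousLinearEquiv.coe_coe,
      Complex.conjCLE_apply, map_one, Complex.conj_I, map_zero, smul_eq_mul,
      Pi.mul_apply, Pi.add_apply, Pi.pow_apply]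
    ring_nf
    simp only [Complex.I_sq]
    ring

set_option maxHeartbeats 2000000 in
lemma GM_second_g2 {p : ℂ × ℂ} (h : ‖p.2‖ < 1) :
    dzbar GMg2 p = conj p.1 * (1 - p.2 * conj p.2)⁻¹ +
      (p.1 + conj p.1 * p.2) * conj p.2 *
        ((1 - p.2 * conj p.2)⁻¹ * (1 - p.2 * conj p.2)⁻¹) ∧
    dzetabar GMg2 p = (1 / 2 : ℂ) * (conj p.1 * conj p.1) * p.2 *
        ((1 - p.2 * conj p.2)⁻¹ * (1 - p.2 * conj p.2)⁻¹) +
      (1 / 2 : ℂ) * (p.1 * p.1) * conj p.2 *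
        ((1 - p.2 * conj p.2)⁻¹ * (1 - p.2 * conj p.2)⁻¹) +
      (p.1 * conj p.1 + (1 / 2 : ℂ) * (conj p.1 * conj p.1) * p.2
          + (1 / 2 : ℂ) * (p.1 * p.1) * conj p.2) *
        ((1 - p.2 * conj p.2)⁻¹ * (1 - p.2 * conj p.2)⁻¹) +
      2 * (p.1 * conj p.1 + (1 / 2 : ℂ) * (conj p.1 * conj p.1) * p.2
          + (1 / 2 : ℂ) * (p.1 * p.1) * conj p.2) * p.2 * conj p.2 *
        ((1 - p.2 * conj p.2)⁻¹ * (1 - p.2 * conj p.2)⁻¹ * (1 - p.2 * conj p.2)⁻¹) := by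
  have hd0 := GM_den_ne h
  have hd0' : 1 - conj p.2 * p.2 ≠ 0 := by
    rw [mul_comm (conj p.2) p.2]; exact hd0
  have hz : HasFDerivAt (fun p : ℂ × ℂ => p.1) (ContinuousLinearMap.fst ℝ ℂ ℂ) p := hasFDerivAt_fst
  have hzb : HasFDerivAt (fun p : ℂ × ℂ => conj p.1)
      (cCLM.comp (ContinuousLinearMap.fst ℝ ℂ ℂ)) p :=
    (cCLM.comp (ContinuousLinearMap.fst ℝ ℂ ℂ)).hasFDerivAt
  have hze : HasFDerivAt (fun p : ℂ × ℂ => p.2) (ContinuousLinearMap.snd ℝ ℂ ℂ) p := hasFDerivAt_snd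
  have hta : HasFDerivAt (fun p : ℂ × ℂ => conj p.2)
      (cCLM.comp (ContinuousLinearMap.snd ℝ ℂ ℂ)) p :=
    (cCLM.comp (ContinuousLinearMap.snd ℝ ℂ ℂ)).hasFDerivAt
  have hden : HasFDerivAt (𝕜 := ℝ) (fun p : ℂ × ℂ => 1 - p.2 * conj p.2) _ p :=
    (hasFDerivAt_const (1 : ℂ) p).sub (hze.mul hta)
  have hinv : HasFDerivAt (𝕜 := ℝ) (fun p : ℂ × ℂ => (1 - p.2 * conj p.2)⁻¹) _ p :=
    (hasFDerivAt_inv' (𝕜 := ℝ) hd0).comp p hden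
  have H := (((hzb.mul hzb).const_mul ((1:ℂ)/2)).mul hinv).add
      ((((hz.mul hzb).add (((hzb.mul hzb).const_mul ((1:ℂ)/2)).mul hze)).add
        (((hz.mul hz).const_mul ((1:ℂ)/2)).mul hta)).mul (hta.mul (hinv.mul hinv)))
  constructor
  · rw [dzbar]; unfold GMg2; erw [H.fderiv]
    simp only [ContinuousLinearMap.add_apply, ContinuousLinearMap.smul_apply,
      ContinuousLinearMap.sub_apply, ContinuousLinearMap.comp_apply,
      ContinuousLinearMap.neg_apply, ContinuousLinearMap.mulLeftRight_apply,
      ContinuousLinearMap.coe_fst', ContinuousLinearMap.coe_snd',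
      ContinuousLinearMap.zero_apply, cCLM, ContinuousLinearEquiv.coe_coe,
      Complex.conjCLE_apply, map_one, Complex.conj_I, map_zero, smul_eq_mul,
      Pi.mul_apply, Pi.add_apply, Pi.pow_apply]
    ring_nf
    simp only [Complex.I_sq]
    ring
  · rw [dzetabar]; unfold GMg2; erw [H.fderiv]
    simp only [ContinuousLinearMap.add_apply, ContinuousLinearMap.smul_apply,
      ContinuousLinearMap.sub_apply, ContinuousLinearMap.comp_apply,
      ContinuousLinearMap.neg_apply, ContinuousLinearMap.mulLeftRight_apply,
      ContinuousLinearMap.coe_fst', ContinuousLinearMap.coe_snd',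
      ContinuousLinearMap.zero_apply, cCLM, ContinuousLinearEquiv.coe_coe,
      Complex.conjCLE_apply, map_one, Complex.conj_I, map_zero, smul_eq_mul,
      Pi.mul_apply, Pi.add_apply, Pi.pow_apply]
    ring_nf
    simp only [Complex.I_sq]
    ring

lemma GM_isOpen : IsOpen {q : ℂ × ℂ | ‖q.2‖ < 1} :=
  isOpen_lt (continuous_norm.comp continuous_snd) continuous_const

set_option maxHeartbeats 2000000 in
/-- On `{|ζ| < 1}` one has `m_{zz̄} = 1/(1 − |ζ|²) ≠ 0` and the Levi determinant
`m_{zz̄}·m_{ζζ̄} − m_{zζ̄}·m_{ζz̄}` vanishes identically; hence the Levi matrix of the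
Gaussier–Merker graphing function has constant rank 1 on `{|ζ| < 1}`. -/
theorem gaussierMerker_levi_rank_one :
    ∀ p : ℂ × ℂ, ‖p.2‖ < 1 →
      dzbar (dz GMm) p = 1 / (1 - (‖p.2‖ : ℂ) ^ 2) ∧
      (1 / (1 - (‖p.2‖ : ℂ) ^ 2)) ≠ 0 ∧
      dzbar (dz GMm) p * dzetabar (dzeta GMm) p
        - dzetabar (dz GMm) p * dzbar (dzeta GMm) p = 0 ∧
      Matrix.rank
        !![dzbar (dz GMm) p, dzetabar (dz GMm) p;
           dzbar (dzeta GMm) p, dzetabar (dzeta GMm) p] = 1 := by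
  intro p h
  have hd0 := GM_den_ne h
  have he1 : dz GMm =ᶠ[nhds p] GMg1 :=
    Filter.eventuallyEq_of_mem (GM_isOpen.mem_nhds h) (fun q hq => (GM_first hq).1)
  have he2 : dzeta GMm =ᶠ[nhds p] GMg2 :=
    Filter.eventuallyEq_of_mem (GM_isOpen.mem_nhds h) (fun q hq => (GM_first hq).2)
  have ea : dzbar (dz GMm) p = dzbar GMg1 p := by rw [dzbar, dzbar, he1.fderiv_eq]
  have eb : dzetabar (dz GMm) p = dzetabar GMg1 p := by rw [dzetabar, dzetabar, he1.fderiv_eq]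
  have ec : dzbar (dzeta GMm) p = dzbar GMg2 p := by rw [dzbar, dzbar, he2.fderiv_eq]
  have ee : dzetabar (dzeta GMm) p = dzetabar GMg2 p := by rw [dzetabar, dzetabar, he2.fderiv_eq]
  rw [ea, eb, ec, ee, (GM_second_g1 h).1, (GM_second_g1 h).2,
    (GM_second_g2 h).1, (GM_second_g2 h).2]
  have habs : ((‖p.2‖ : ℂ)) ^ 2 = p.2 * conj p.2 := by
    rw [Complex.mul_conj]
    norm_cast
    exact Complex.sq_norm _
  have hX : (1 - p.2 * conj p.2) * (1 - p.2 * conj p.2)⁻¹ = 1 := mul_inv_cancel₀ hd0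
  have hb : p.1 * (1 - p.2 * conj p.2)⁻¹ +
      (conj p.1 + p.1 * conj p.2) * p.2 *
        ((1 - p.2 * conj p.2)⁻¹ * (1 - p.2 * conj p.2)⁻¹) =
      (p.1 + conj p.1 * p.2) *
        ((1 - p.2 * conj p.2)⁻¹ * (1 - p.2 * conj p.2)⁻¹) := by
    linear_combination (-(p.1 * (1 - p.2 * conj p.2)⁻¹)) * hX
  have hc : conj p.1 * (1 - p.2 * conj p.2)⁻¹ +
      (p.1 + conj p.1 * p.2) * conj p.2 *
        ((1 - p.2 * conj p.2)⁻¹ * (1 - p.2 * conj p.2)⁻¹) =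
      (conj p.1 + p.1 * conj p.2) *
        ((1 - p.2 * conj p.2)⁻¹ * (1 - p.2 * conj p.2)⁻¹) := by
    linear_combination (-(conj p.1 * (1 - p.2 * conj p.2)⁻¹)) * hX
  have he : (1 / 2 : ℂ) * (conj p.1 * conj p.1) * p.2 *
        ((1 - p.2 * conj p.2)⁻¹ * (1 - p.2 * conj p.2)⁻¹) +
      (1 / 2 : ℂ) * (p.1 * p.1) * conj p.2 *
        ((1 - p.2 * conj p.2)⁻¹ * (1 - p.2 * conj p.2)⁻¹) +
      (p.1 * conj p.1 + (1 / 2 : ℂ) * (conj p.1 * conj p.1) * p.2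
          + (1 / 2 : ℂ) * (p.1 * p.1) * conj p.2) *
        ((1 - p.2 * conj p.2)⁻¹ * (1 - p.2 * conj p.2)⁻¹) +
      2 * (p.1 * conj p.1 + (1 / 2 : ℂ) * (conj p.1 * conj p.1) * p.2
          + (1 / 2 : ℂ) * (p.1 * p.1) * conj p.2) * p.2 * conj p.2 *
        ((1 - p.2 * conj p.2)⁻¹ * (1 - p.2 * conj p.2)⁻¹ * (1 - p.2 * conj p.2)⁻¹) =
      (p.1 + conj p.1 * p.2) * (conj p.1 + p.1 * conj p.2) *
        ((1 - p.2 * conj p.2)⁻¹ * (1 - p.2 * conj p.2)⁻¹ * (1 - p.2 * conj p.2)⁻¹) := by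
    linear_combination (-(((1 - p.2 * conj p.2)⁻¹ * (1 - p.2 * conj p.2)⁻¹) *
      (p.1 * conj p.1 + conj p.1 * conj p.1 * p.2 + p.1 * p.1 * conj p.2))) * hX
  rw [hb, hc, he]
  refine ⟨?_, ?_, by ring, ?_⟩
  · rw [habs, one_div]
  · rw [habs]
    exact one_div_ne_zero hd0
  · exact rank_two_eq_one (inv_ne_zero hd0) (by ring)
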